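/- The linear operator R on M₂(F) defined by R(e₁₁) = 0, R(e₁₂) = e₁₁, R(e₂₁) = e₁₁, R(e₂₂) = 0 is a Rota–Baxter operator of weight 0 on the Jordan algebra M₂(F)^(+), but it is not a Rota–Baxter operator of weight 0 on the associative algebra M₂(F). -/

import Mathlib

/-- The matrix unit `eᵢⱼ` in `M₂(F)`. -/
def E (F : Type*) [Field F] (i j : Fin 2) : Matrix (Fin 2) (Fin 2) F :=
  Matrix.single i j 1

theorem second_example {F : Type*} [Field F] (h2 : (2 : F) ≠ 0)
    (R : Matrix (Fin 2) (Fin 2) F →ₗ[F] Matrix (Fin 2) (Fin 2) F)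
    (h11 : R (E F 0 0) = 0) (h12 : R (E F 0 1) = E F 0 0)
    (h21 : R (E F 1 0) = E F 0 0) (h22 : R (E F 1 1) = 0) :
    (∀ x y : Matrix (Fin 2) (Fin 2) F,
      (2 : F)⁻¹ • (R x * R y + R y * R x) =
        R ((2 : F)⁻¹ • (R x * y + y * R x) + (2 : F)⁻¹ • (x * R y + R y * x))) ∧
    ¬ (∀ x y : Matrix (Fin 2) (Fin 2) F, R x * R y = R (R x * y + x * R y)) := by
  have Rform : ∀ x : Matrix (Fin 2) (Fin 2) F, R x = (x 0 1 + x 1 0) • E F 0 0 := by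
    intro x
    have hx : x = x 0 0 • E F 0 0 + x 0 1 • E F 0 1 + x 1 0 • E F 1 0 +
        x 1 1 • E F 1 1 := by
      ext i j
      fin_cases i <;> fin_cases j <;>
        simp [E, Matrix.single, Matrix.of_apply]
    conv_lhs => rw [hx]
    simp only [map_add, map_smul, h11, h12, h21, h22, smul_zero, zero_add, add_zero,
      add_smul]
  constructor
  · intro x y
    rw [Rform x, Rform y]
    have key : ∀ a b : Matrix (Fin 2) (Fin 2) F, a = b → R a = R b := fun a b h => by rw [h]
    rw [Rform ((2 : F)⁻¹ • (((x 0 1 + x 1 0) • E F 0 0) * y + y * ((x 0 1 + x 1 0) • E F 0 0)) +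
      (2 : F)⁻¹ • (x * ((y 0 1 + y 1 0) • E F 0 0) + ((y 0 1 + y 1 0) • E F 0 0) * x))]
    ext i j
    fin_cases i <;> fin_cases j <;>
      · simp [E, Matrix.single, Matrix.mul_apply, Fin.sum_univ_two,
          Matrix.smul_apply, Matrix.add_apply, Matrix.of_apply]
        try field_simp
        try ring
  · intro h
    have := h (E F 0 1) (E F 1 0)
    rw [h12, h21] at this
    have hprod : E F 0 0 * E F 1 0 + E F 0 1 * E F 0 0 = 0 := by
      ext i j
      fin_cases i <;> fin_cases j <;>
        simp [E, Matrix.single, Matrix.mul_apply, Fin.sum_univ_two, Matrix.of_apply]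
    rw [hprod, map_zero] at this
    have h00 : (E F 0 0 * E F 0 0) 0 0 = (0 : Matrix (Fin 2) (Fin 2) F) 0 0 := by rw [this]
    simp [E, Matrix.single, Matrix.mul_apply, Fin.sum_univ_two, Matrix.of_apply] at h00
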